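/- Let G be a group in which every maximal locally nilpotent subgroup is malnormal, and suppose G is not locally nilpotent. Then G is a domain: every nontrivial normal subgroup of G has trivial centralizer. -/

import Mathlib

def Malnormal {G : Type*} [Group G] (H : Subgroup G) : Prop :=
  ∀ x : G, x ∉ H → ∀ h ∈ H, x⁻¹ * h * x ∈ H → h = 1

/-- The subgroup `H` is locally nilpotent: every finitely generated subgroup
contained in `H` is nilpotent. -/
def LocNilp {G : Type*} [Group G] (H : Subgroup G) : Prop :=
  ∀ K : Subgroup G, K ≤ H → K.FG → Group.IsNilpotent K

lemma locNilp_sSup_chain {G : Type*} [Group G] {c : Set (Subgroup G)}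
    (hc : IsChain (· ≤ ·) c) (hne : c.Nonempty) (hln : ∀ H ∈ c, LocNilp H) :
    LocNilp (sSup c) := by
  intro K hK hFG
  obtain ⟨S, hS⟩ := hFG
  have hdir : DirectedOn (· ≤ ·) c := hc.directedOn
  have hdir' : DirectedOn (fun H J : Subgroup G => (H : Set G) ⊆ (J : Set G)) c := by
    intro x hx y hy
    obtain ⟨z, hz, h1, h2⟩ := hdir x hx y hy
    exact ⟨z, hz, h1, h2⟩
  have hsub : (S : Set G) ⊆ ⋃ H ∈ c, (H : Set G) := by
    intro g hg
    have : g ∈ K := hS ▸ Subgroup.subset_closure hg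
    have : g ∈ sSup c := hK this
    rw [Subgroup.mem_sSup_of_directedOn hne hdir] at this
    obtain ⟨H, hH, hgH⟩ := this
    exact Set.mem_biUnion hH hgH
  obtain ⟨H, hH, hSH⟩ :=
    DirectedOn.exists_mem_subset_of_finset_subset_biUnion hne hdir' hsub
  have hKH : K ≤ H := by
    rw [← hS]
    exact (Subgroup.closure_le H).2 hSH
  exact hln H hH K hKH ⟨S, hS⟩

lemma exists_maximal_locNilp {G : Type*} [Group G] (H : Subgroup G) (hH : LocNilp H) :
    ∃ M : Subgroup G, H ≤ M ∧ Maximal LocNilp M := by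
  obtain ⟨M, hHM, hM⟩ := zorn_le_nonempty₀ {H : Subgroup G | LocNilp H}
    (fun c hcs hc y hy => ⟨sSup c, locNilp_sSup_chain hc ⟨y, hy⟩ hcs,
      fun z hz => le_sSup hz⟩) H hH
  exact ⟨M, hHM, hM⟩

theorem stmt6 {G : Type*} [Group G]
    (hmal : ∀ M : Subgroup G, Maximal LocNilp M → Malnormal M)
    (hnotln : ¬ LocNilp (⊤ : Subgroup G)) :
    ∀ K : Subgroup G, K.Normal → K ≠ ⊥ → Subgroup.centralizer (K : Set G) = ⊥ := by
  intro K hN hne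
  by_contra hC
  obtain ⟨c, hc1⟩ := (Subgroup.ne_bot_iff_exists_ne_one.1 hC)
  obtain ⟨k, hk1⟩ := (Subgroup.ne_bot_iff_exists_ne_one.1 hne)
  -- zpowers c is locally nilpotent
  have hln : LocNilp (Subgroup.zpowers (c : G)) := by
    intro L hL _
    letI : CommGroup ↥L :=
      { (inferInstance : Group ↥L) with
        mul_comm := by
          rintro ⟨a, ha⟩ ⟨b, hb⟩
          obtain ⟨m, hm⟩ := Subgroup.mem_zpowers_iff.1 (hL ha)
          obtain ⟨n, hn⟩ := Subgroup.mem_zpowers_iff.1 (hL hb)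
          ext
          simp only [Subgroup.coe_mul]
          rw [← hm, ← hn, ← zpow_add, ← zpow_add, add_comm] }
    infer_instance
  obtain ⟨M, hcM, hM⟩ := exists_maximal_locNilp _ hln
  have hcM' : (c : G) ∈ M := hcM (Subgroup.mem_zpowers _)
  have hmalM := hmal M hM
  -- K ≤ M
  have hKM : K ≤ M := by
    intro g hg
    by_contra hgM
    have hcomm : g⁻¹ * (c : G) * g = c := by
      have := Subgroup.mem_centralizer_iff.1 c.2 g hg
      rw [mul_assoc, ← this, inv_mul_cancel_left]
    exact hc1 (Subtype.ext (hmalM g hgM c hcM' (by rw [hcomm]; exact hcM')))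
  -- M = ⊤
  have hMtop : M = ⊤ := by
    rw [eq_top_iff]
    intro g _
    by_contra hgM
    have hkM : (k : G) ∈ M := hKM k.2
    have hconj : g⁻¹ * (k : G) * g ∈ K := by
      have := hN.conj_mem (k : G) k.2 g⁻¹
      rwa [inv_inv] at this
    exact hk1 (Subtype.ext (hmalM g hgM k hkM (hKM hconj)))
  rw [hMtop] at hM
  exact hnotln hM.1
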